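/- Let (P₀,…,P₈) be the symmetric Clifford system on ℝ¹⁶ arising from the octonions (via the Clifford algebra (E₁,…,E₇) on ℝ⁸ with ⟨u,v⟩² + Σ_{α=1}^7⟨E_αu,v⟩² = |u|²|v|²). Then Σ_{α=0}^8 ⟨P_αx,x⟩² = |x|⁴ for all x ∈ ℝ¹⁶. -/
import Mathlib


open Matrix

/-- For the symmetric Clifford system `(P₀,…,P₈)` on `ℝ¹⁶` arising from the octonions
(via a Clifford algebra `(E₁,…,E₇)` on `ℝ⁸` with `⟨u,v⟩² + Σ⟨Eαu,v⟩² = |u|²|v|²`),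
one has `Σ_{α=0}^{8} ⟨Pαx,x⟩² = |x|⁴` for all `x ∈ ℝ¹⁶`. -/
theorem stmt15 (E : Fin 7 → Matrix (Fin 8) (Fin 8) ℝ)
    (hskew : ∀ α, (E α)ᵀ = -E α)
    (hcliff : ∀ α β, E α * E β + E β * E α
        = if α = β then -((2 : ℝ) • (1 : Matrix (Fin 8) (Fin 8) ℝ)) else 0)
    (hoct : ∀ u v : Fin 8 → ℝ,
        (u ⬝ᵥ v) ^ 2 + ∑ α, ((E α).mulVec u ⬝ᵥ v) ^ 2 = (u ⬝ᵥ u) * (v ⬝ᵥ v)) :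
    ∀ x : Fin 8 ⊕ Fin 8 → ℝ,
      ((fromBlocks 1 0 0 (-1)).mulVec x ⬝ᵥ x) ^ 2
        + ((fromBlocks 0 1 1 0).mulVec x ⬝ᵥ x) ^ 2
        + ∑ α, ((fromBlocks 0 (E α) (-(E α)) 0).mulVec x ⬝ᵥ x) ^ 2
      = (x ⬝ᵥ x) ^ 2 := by
  intro x
  obtain ⟨u, v, rfl⟩ : ∃ u v, x = Sum.elim u v :=
    ⟨x ∘ Sum.inl, x ∘ Sum.inr, by funext s; cases s <;> rfl⟩
  have hsk : ∀ α, (E α).mulVec u ⬝ᵥ v = -((E α).mulVec v ⬝ᵥ u) := by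
    intro α
    rw [dotProduct_comm, dotProduct_mulVec, ← mulVec_transpose, hskew, neg_mulVec,
      neg_dotProduct]
  simp only [fromBlocks_mulVec, sumElim_dotProduct_sumElim, one_mulVec, zero_mulVec,
    neg_mulVec, add_zero, zero_add, neg_dotProduct, Sum.elim_comp_inl, Sum.elim_comp_inr]
  have hsum : ∑ α, ((E α).mulVec v ⬝ᵥ u + -((E α).mulVec u ⬝ᵥ v)) ^ 2
      = 4 * ∑ α, ((E α).mulVec v ⬝ᵥ u) ^ 2 := by
    rw [Finset.mul_sum]
    refine Finset.sum_congr rfl fun α _ => ?_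
    rw [hsk α]; ring
  rw [hsum]
  have key := hoct v u
  have hc : u ⬝ᵥ v = v ⬝ᵥ u := dotProduct_comm u v
  rw [hc]; linear_combination 4 * key
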